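/- Let S be a uniformly random string in Σ^n with |Σ| ≥ e³/ε² for some ε ∈ (0,1). Then S is ε-self-matching with probability at least 1 - (e²/(ε²|Σ|))^{nε} ≥ 1 - e^{-nε}. -/

import Mathlib

open Finset
open scoped Classical

/-- A string `S ∈ Σⁿ` is `ε`-self-matching if every monotone matching between `S` and
itself (two strictly increasing sequences of positions `a, b` with `S_{aᵢ} = S_{bᵢ}`)
contains at most `ε·n` pairs with `aᵢ ≠ bᵢ`. -/
def IsSelfMatching {α : Type*} {n : ℕ} (ε : ℝ) (S : Fin n → α) : Prop :=
  ∀ (k : ℕ) (a b : Fin k → Fin n), StrictMono a → StrictMono b →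
    (∀ i, S (a i) = S (b i)) →
    ((Finset.univ.filter (fun i : Fin k => a i ≠ b i)).card : ℝ) ≤ ε * n

lemma strictMono_eq_of_image_eq {n m : ℕ} {f g : Fin m → Fin n} (hf : StrictMono f)
    (hg : StrictMono g) (h : Finset.image f univ = Finset.image g univ) : f = g := by
  have hcard : (Finset.image f univ).card = m := by
    rw [Finset.card_image_of_injective _ hf.injective, card_univ, Fintype.card_fin]
  have h1 := Finset.orderEmbOfFin_unique hcard
    (fun x => Finset.mem_image_of_mem f (mem_univ x)) hf
  have h2 := Finset.orderEmbOfFin_unique hcard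
    (fun x => h ▸ Finset.mem_image_of_mem g (mem_univ x)) hg
  rw [h2]; exact h1

lemma card_pairs_le (n m : ℕ) :
    (univ.filter fun p : (Fin m → Fin n) × (Fin m → Fin n) =>
        StrictMono p.1 ∧ StrictMono p.2 ∧ ∀ i, p.1 i ≠ p.2 i).card
      ≤ n.choose m ^ 2 := by
  classical
  have key : (univ.filter fun p : (Fin m → Fin n) × (Fin m → Fin n) =>
        StrictMono p.1 ∧ StrictMono p.2 ∧ ∀ i, p.1 i ≠ p.2 i).card
      ≤ ((univ.powersetCard m) ×ˢ (univ.powersetCard m) :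
          Finset (Finset (Fin n) × Finset (Fin n))).card := by
    apply Finset.card_le_card_of_injOn
      (fun p => (Finset.image p.1 univ, Finset.image p.2 univ))
    · intro p hp
      simp only [Finset.mem_coe] at hp ⊢
      rw [mem_filter] at hp
      obtain ⟨-, h1, h2, -⟩ := hp
      rw [Finset.mem_product, Finset.mem_powersetCard, Finset.mem_powersetCard]
      refine ⟨⟨subset_univ _, ?_⟩, subset_univ _, ?_⟩
      · rw [Finset.card_image_of_injective _ h1.injective, card_univ, Fintype.card_fin]
      · rw [Finset.card_image_of_injective _ h2.injective, card_univ, Fintype.card_fin]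
    · intro p hp p' hp' h
      rw [coe_filter, Set.mem_setOf_eq] at hp hp'
      obtain ⟨-, h1, h2, -⟩ := hp
      obtain ⟨-, h1', h2', -⟩ := hp'
      have e1 := congrArg Prod.fst h
      have e2 := congrArg Prod.snd h
      simp only at e1 e2
      exact Prod.ext (strictMono_eq_of_image_eq h1 h1' e1)
        (strictMono_eq_of_image_eq h2 h2' e2)
  calc _ ≤ _ := key
    _ = n.choose m ^ 2 := by
      rw [Finset.card_product, Finset.card_powersetCard, card_univ, Fintype.card_fin, sq]

lemma card_bad_le {α : Type*} [Fintype α] [DecidableEq α] {n m : ℕ}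
    (a b : Fin m → Fin n) (ha : StrictMono a) (hb : StrictMono b)
    (hab : ∀ i, a i ≠ b i) :
    (univ.filter fun S : Fin n → α => ∀ i, S (a i) = S (b i)).card
      ≤ Fintype.card α ^ (n - m) := by
  classical
  set c : Fin m → Fin n := fun i => max (a i) (b i) with hc
  have hcmono : StrictMono c := fun i j hij => max_lt_max (ha hij) (hb hij)
  set T : Finset (Fin n) := Finset.image c univ with hT
  have hTcard : T.card = m := by
    rw [hT, Finset.card_image_of_injective _ hcmono.injective, card_univ, Fintype.card_fin]
  have key : ∀ S S' : Fin n → α, (∀ i, S (a i) = S (b i)) → (∀ i, S' (a i) = S' (b i)) →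
      (∀ p : Fin n, p ∉ T → S p = S' p) → S = S' := by
    intro S S' hS hS' hagree
    suffices hind : ∀ N (p : Fin n), (p : ℕ) < N → S p = S' p by
      funext p; exact hind n p p.isLt
    intro N
    induction N with
    | zero => exact fun p hp => absurd hp (Nat.not_lt_zero _)
    | succ N ih =>
      intro p hp
      by_cases hpT : p ∈ T
      · obtain ⟨i, -, hi⟩ := Finset.mem_image.1 hpT
        rcases lt_or_gt_of_ne (hab i) with h1 | h1
        · have hci : c i = b i := max_eq_right h1.le
          have hap : a i < p := by rw [← hi, hci]; exact h1
          have haN : (a i : ℕ) < N := by omega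
          calc S p = S (b i) := by rw [← hi, hci]
            _ = S (a i) := (hS i).symm
            _ = S' (a i) := ih (a i) haN
            _ = S' (b i) := hS' i
            _ = S' p := by rw [← hi, hci]
        · have hci : c i = a i := max_eq_left h1.le
          have hbp : b i < p := by rw [← hi, hci]; exact h1
          have hbN : (b i : ℕ) < N := by omega
          calc S p = S (a i) := by rw [← hi, hci]
            _ = S (b i) := hS i
            _ = S' (b i) := ih (b i) hbN
            _ = S' (a i) := (hS' i).symm
            _ = S' p := by rw [← hi, hci]
      · exact hagree p hpT
  have hinj : Function.Injective
      (fun (S : {S : Fin n → α // ∀ i, S (a i) = S (b i)}) (q : {x : Fin n // x ∉ T}) =>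
        S.1 q.1) := by
    intro S S' h
    ext p
    refine congrFun (key S.1 S'.1 S.2 S'.2 fun p hpT => ?_) p
    exact congrFun h ⟨p, hpT⟩
  have hle := Fintype.card_le_of_injective _ hinj
  rw [Fintype.card_subtype] at hle
  calc (univ.filter fun S : Fin n → α => ∀ i, S (a i) = S (b i)).card
      ≤ Fintype.card ({x : Fin n // x ∉ T} → α) := hle
    _ = Fintype.card α ^ (n - m) := by
        rw [Fintype.card_fun, Fintype.card_subtype_compl, Fintype.card_fin,
          Fintype.card_coe, hTcard]

lemma bad_subset {α : Type*} [Fintype α] [DecidableEq α] (n : ℕ) (ε : ℝ) (hε0 : 0 < ε) :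
    (univ.filter fun S : Fin n → α => ¬ IsSelfMatching ε S) ⊆
      (univ.filter fun p : (Fin (⌊ε * n⌋₊ + 1) → Fin n) × (Fin (⌊ε * n⌋₊ + 1) → Fin n) =>
          StrictMono p.1 ∧ StrictMono p.2 ∧ ∀ i, p.1 i ≠ p.2 i).biUnion
        (fun p => univ.filter fun S => ∀ i, S (p.1 i) = S (p.2 i)) := by
  classical
  intro S hS
  rw [mem_filter] at hS
  obtain ⟨-, hS⟩ := hS
  rw [IsSelfMatching] at hS
  push_neg at hS
  obtain ⟨k, a, b, ha, hb, heq, hcard⟩ := hS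
  set F := univ.filter (fun i : Fin k => a i ≠ b i) with hF
  have hmF : ⌊ε * n⌋₊ + 1 ≤ F.card := by
    have h1 : ⌊ε * n⌋₊ < F.card := (Nat.floor_lt (by positivity)).2 hcard
    omega
  set g := F.orderEmbOfCardLe hmF with hg
  have hgF : ∀ i, g i ∈ F := fun i => F.orderEmbOfCardLe_mem hmF i
  rw [mem_biUnion]
  refine ⟨(a ∘ g, b ∘ g), ?_, ?_⟩
  · rw [mem_filter]
    refine ⟨mem_univ _, ha.comp g.strictMono, hb.comp g.strictMono, fun i => ?_⟩
    have := hgF i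
    rw [hF, mem_filter] at this
    exact this.2
  · rw [mem_filter]
    exact ⟨mem_univ _, fun i => heq (g i)⟩

lemma choose_le_pow_real (n m : ℕ) (hm : 0 < m) :
    (n.choose m : ℝ) ≤ (Real.exp 1 * n / m) ^ m := by
  have hfact : (n.choose m : ℝ) * m.factorial ≤ (n : ℝ) ^ m := by
    have h := Nat.descFactorial_le_pow n m
    rw [Nat.descFactorial_eq_factorial_mul_choose] at h
    exact_mod_cast (by rw [mul_comm]; exact_mod_cast h : n.choose m * m.factorial ≤ n ^ m)
  have hf0 : (0:ℝ) < (m.factorial : ℝ) := by exact_mod_cast m.factorial_pos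
  have hexp : ((m:ℝ)) ^ m / m.factorial ≤ Real.exp m := by
    refine le_trans ?_ (Real.sum_le_exp_of_nonneg (by positivity : (0:ℝ) ≤ (m:ℝ)) (m+1))
    exact Finset.single_le_sum (f := fun i => (m:ℝ)^i / i.factorial)
      (fun i _ => by positivity) (Finset.self_mem_range_succ m)
  have h1 : (m:ℝ)^m ≤ Real.exp m * m.factorial := by
    rw [div_le_iff₀ hf0] at hexp; exact hexp
  have h2 : Real.exp (m : ℝ) = Real.exp 1 ^ m := by
    rw [← Real.exp_nat_mul, mul_one]
  rw [div_pow, mul_pow, le_div_iff₀ (by positivity : (0:ℝ) < (m:ℝ)^m)]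
  calc (n.choose m : ℝ) * (m:ℝ)^m
      ≤ (n.choose m : ℝ) * (Real.exp m * m.factorial) := by
        exact mul_le_mul_of_nonneg_left h1 (Nat.cast_nonneg _)
    _ = Real.exp m * ((n.choose m : ℝ) * m.factorial) := by ring
    _ ≤ Real.exp m * (n:ℝ)^m := mul_le_mul_of_nonneg_left hfact (Real.exp_pos _).le
    _ = Real.exp 1 ^ m * (n:ℝ)^m := by rw [h2]

theorem random_string_self_matching {α : Type*} [Fintype α] [DecidableEq α]
    (q : ℕ) (hq : q = Fintype.card α) (n : ℕ) (hn : 0 < n)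
    (ε : ℝ) (hε : ε ∈ Set.Ioo (0 : ℝ) 1)
    (hbig : Real.exp 3 / ε ^ 2 ≤ (q : ℝ)) :
    (1 : ℝ) - (Real.exp 2 / (ε ^ 2 * q)) ^ ((n : ℝ) * ε)
        ≤ ((Finset.univ.filter
              (fun S : Fin n → α => IsSelfMatching ε S)).card : ℝ) / (q : ℝ) ^ n ∧
      (Real.exp 2 / (ε ^ 2 * q)) ^ ((n : ℝ) * ε) ≤ Real.exp (-((n : ℝ) * ε)) := by
  obtain ⟨hε0, hε1⟩ := hε
  have hn' : (0:ℝ) < n := by exact_mod_cast hn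
  have hq0 : (0:ℝ) < q := lt_of_lt_of_le (by positivity) hbig
  have hqn : (0:ℝ) < (q:ℝ)^n := by positivity
  have hεn : (0:ℝ) < (n:ℝ) * ε := by positivity
  set y : ℝ := Real.exp 2 / (ε^2 * q) with hy
  have hy0 : 0 < y := by positivity
  have hεq : Real.exp 3 ≤ ε^2 * q := by
    rw [div_le_iff₀ (by positivity)] at hbig
    linarith [hbig]
  have hy1 : y ≤ Real.exp (-1) := by
    have h : Real.exp 2 / (ε^2*q) ≤ Real.exp 2 / Real.exp 3 := by
      gcongr
    calc y ≤ Real.exp 2 / Real.exp 3 := h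
      _ = Real.exp (-1) := by rw [← Real.exp_sub]; norm_num
  have hy1' : y ≤ 1 := hy1.trans (Real.exp_le_one_iff.2 (by norm_num))
  have part2 : y ^ ((n:ℝ)*ε) ≤ Real.exp (-((n:ℝ)*ε)) := by
    calc y ^ ((n:ℝ)*ε) ≤ Real.exp (-1) ^ ((n:ℝ)*ε) :=
        Real.rpow_le_rpow hy0.le hy1 hεn.le
      _ = Real.exp (-((n:ℝ)*ε)) := by rw [← Real.exp_mul, neg_one_mul]
  refine ⟨?_, part2⟩
  obtain ⟨m, hmdef⟩ : ∃ m : ℕ, m = ⌊ε * n⌋₊ + 1 := ⟨_, rfl⟩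
  have hm0 : 0 < m := by omega
  have hmgt : ε * n < m := by
    rw [hmdef]
    push_cast
    exact Nat.lt_floor_add_one _
  have hmn : m ≤ n := by
    have h1 : ⌊ε*(n:ℝ)⌋₊ < n := (Nat.floor_lt (by positivity)).2 (by nlinarith)
    omega
  -- counting bad strings
  have hbadnat : (univ.filter fun S : Fin n → α => ¬ IsSelfMatching ε S).card
      ≤ n.choose m ^ 2 * q ^ (n - m) := by
    set P := (univ.filter fun p : (Fin m → Fin n) × (Fin m → Fin n) =>
        StrictMono p.1 ∧ StrictMono p.2 ∧ ∀ i, p.1 i ≠ p.2 i) with hP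
    calc (univ.filter fun S : Fin n → α => ¬ IsSelfMatching ε S).card
        ≤ (P.biUnion (fun p => univ.filter fun S : Fin n → α =>
            ∀ i, S (p.1 i) = S (p.2 i))).card :=
          by
            have hsub := bad_subset (α := α) n ε hε0
            rw [← hmdef] at hsub
            exact Finset.card_le_card hsub
      _ ≤ ∑ p ∈ P, (univ.filter fun S : Fin n → α =>
            ∀ i, S (p.1 i) = S (p.2 i)).card := by
            exact Finset.card_biUnion_le (s := P)
              (t := fun p => univ.filter fun S : Fin n → α => ∀ i, S (p.1 i) = S (p.2 i))
      _ ≤ P.card * q ^ (n - m) := by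
          apply Finset.sum_le_card_nsmul
          intro p hp
          rw [hP, mem_filter] at hp
          obtain ⟨-, h1, h2, h3⟩ := hp
          have hcb := card_bad_le (α := α) p.1 p.2 h1 h2 h3
          rwa [← hq] at hcb
      _ ≤ n.choose m ^ 2 * q ^ (n - m) := by
          exact Nat.mul_le_mul_right _ (card_pairs_le n m)
  have hbad : ((univ.filter fun S : Fin n → α => ¬ IsSelfMatching ε S).card : ℝ)
      ≤ (n.choose m : ℝ)^2 * (q:ℝ)^(n-m) := by exact_mod_cast hbadnat
  have hchoose := choose_le_pow_real n m hm0
  have hx0 : (0:ℝ) ≤ Real.exp 1 * n / m := by positivity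
  have hxy : (Real.exp 1 * n / m)^2 ≤ y * q := by
    have h1 : Real.exp 1 * n / m ≤ Real.exp 1 / ε := by
      rw [div_le_div_iff₀ (by positivity) hε0]
      nlinarith [Real.exp_pos 1, hmgt]
    have h2 : y * q = Real.exp 2 / ε^2 := by
      rw [hy]; field_simp
    rw [h2]
    calc (Real.exp 1 * n/m)^2 ≤ (Real.exp 1/ε)^2 := pow_le_pow_left₀ hx0 h1 2
      _ = Real.exp 2 / ε^2 := by
          rw [div_pow]
          congr 1
          rw [← Real.exp_nat_mul]; norm_num
  have hkey : ((univ.filter fun S : Fin n → α => ¬ IsSelfMatching ε S).card : ℝ)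
      ≤ y ^ ((n:ℝ)*ε) * (q:ℝ)^n := by
    calc ((univ.filter fun S : Fin n → α => ¬ IsSelfMatching ε S).card : ℝ)
        ≤ (n.choose m : ℝ)^2 * (q:ℝ)^(n-m) := hbad
      _ ≤ ((Real.exp 1 * n/m)^m)^2 * (q:ℝ)^(n-m) := by
          gcongr
      _ = ((Real.exp 1 * n/m)^2)^m * (q:ℝ)^(n-m) := by ring
      _ ≤ (y*q)^m * (q:ℝ)^(n-m) := by
          gcongr

      _ = y^m * ((q:ℝ)^m * (q:ℝ)^(n-m)) := by rw [mul_pow]; ring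
      _ = y^m * (q:ℝ)^n := by rw [← pow_add]; congr 2; omega
      _ ≤ y^((n:ℝ)*ε) * (q:ℝ)^n := by
          apply mul_le_mul_of_nonneg_right _ hqn.le
          rw [← Real.rpow_natCast y m]
          exact Real.rpow_le_rpow_of_exponent_ge hy0 hy1' (by rw [mul_comm]; exact hmgt.le)
  have hsplit : (univ.filter fun S : Fin n → α => IsSelfMatching ε S).card
      + (univ.filter fun S : Fin n → α => ¬ IsSelfMatching ε S).card = q^n := by
    rw [Finset.card_filter_add_card_filter_not, card_univ, Fintype.card_fun,
      Fintype.card_fin, hq]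
  have hgood : ((univ.filter fun S : Fin n → α => IsSelfMatching ε S).card : ℝ)
      = (q:ℝ)^n - ((univ.filter fun S : Fin n → α => ¬ IsSelfMatching ε S).card : ℝ) := by
    have := congrArg (fun t : ℕ => (t : ℝ)) hsplit
    push_cast at this
    linarith
  rw [hgood, sub_div, div_self hqn.ne']
  have hfin : ((univ.filter fun S : Fin n → α => ¬ IsSelfMatching ε S).card : ℝ) / (q:ℝ)^n
      ≤ y ^ ((n:ℝ)*ε) := by
    rw [div_le_iff₀ hqn]; exact hkey
  linarith
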